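/- For the Brinkmann metric G with smooth profile H : U → ℝ satisfying ∂_u H = 0, the Ricci tensor R_{ab} (defined by the stated coordinate formula) satisfies: R_{vv} = (1/2)(∂_x²H + ∂_y²H), and R_{ab} = 0 for every other pair of indices (a,b) ≠ (v,v). In particular, the Brinkmann metric is Ricci-flat if and only if H is harmonic in the transverse variables (x,y). -/

import Mathlib

/- Background: Brinkmann coordinates (u,v,x,y) = indices (0,1,2,3) on ℝ⁴,
   pp-wave metric g = 2 du dv + H dv² - dx² - dy². -/

noncomputable section

abbrev V4 : Type := Fin 4 → ℝ

/-- Partial derivative of a complex-valued function in coordinate direction `i`. -/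
def pdC (i : Fin 4) (f : V4 → ℂ) : V4 → ℂ :=
  fun x => fderiv ℝ f x (Pi.single i 1)

/-- Partial derivative of a real-valued function in coordinate direction `i`. -/
def pdR (i : Fin 4) (f : V4 → ℝ) : V4 → ℝ :=
  fun x => fderiv ℝ f x (Pi.single i 1)

/-- Wirtinger derivative ∂_ζ = (∂_x - i ∂_y)/√2. -/
def pdZ (f : V4 → ℂ) : V4 → ℂ :=
  fun x => (pdC 2 f x - Complex.I * pdC 3 f x) / (Real.sqrt 2 : ℂ)

/-- Wirtinger derivative ∂_ζ̄ = (∂_x + i ∂_y)/√2. -/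
def pdZb (f : V4 → ℂ) : V4 → ℂ :=
  fun x => (pdC 2 f x + Complex.I * pdC 3 f x) / (Real.sqrt 2 : ℂ)

/-- The Brinkmann (pp-wave) metric matrix. -/
def brinkmann (H : V4 → ℝ) (x : V4) : Matrix (Fin 4) (Fin 4) ℝ :=
  !![0, 1, 0, 0; 1, H x, 0, 0; 0, 0, -1, 0; 0, 0, 0, -1]

/-- The inverse metric. -/
def gInv (H : V4 → ℝ) (x : V4) : Matrix (Fin 4) (Fin 4) ℝ := (brinkmann H x)⁻¹

/-- Christoffel symbols Γ^c_{ab} of the Brinkmann metric. -/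
def Gam (H : V4 → ℝ) (c a b : Fin 4) (x : V4) : ℝ :=
  (1/2) * ∑ d, gInv H x c d *
    (pdR a (fun y => brinkmann H y d b) x + pdR b (fun y => brinkmann H y d a) x
      - pdR d (fun y => brinkmann H y a b) x)

/-- Ricci tensor R_{ab} = Σ_c ∂_c Γ^c_{ab} − Σ_c ∂_a Γ^c_{cb}
      + Σ_{c,d}(Γ^c_{cd} Γ^d_{ab} − Γ^c_{ad} Γ^d_{cb}). -/
def ric (H : V4 → ℝ) (a b : Fin 4) (x : V4) : ℝ :=
  (∑ c, pdR c (fun y => Gam H c a b y) x)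
  - (∑ c, pdR a (fun y => Gam H c c b y) x)
  + ∑ c, ∑ d, (Gam H c c d x * Gam H d a b x - Gam H c a d x * Gam H d c b x)

/-- Wave operator □φ = Σ_{a,b} (G⁻¹)^{ab}(∂_a∂_b φ − Σ_c Γ^c_{ab} ∂_c φ). -/
def boxOp (H : V4 → ℝ) (φ : V4 → ℂ) (x : V4) : ℂ :=
  ∑ a, ∑ b, (gInv H x a b : ℂ) *
    (pdC a (pdC b φ) x - ∑ c, (Gam H c a b x : ℂ) * pdC c φ x)

/-- Covariant derivative of a real one-form: ∇_a ω_b = ∂_a ω_b − Γ^c_{ab} ω_c. -/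
def covD1R (H : V4 → ℝ) (ω : Fin 4 → V4 → ℝ) (a b : Fin 4) (x : V4) : ℝ :=
  pdR a (ω b) x - ∑ c, Gam H c a b x * ω c x

/-- Covariant derivative of a complex 2-tensor:
    ∇_c h_{ab} = ∂_c h_{ab} − Γ^d_{ca} h_{db} − Γ^d_{cb} h_{ad}. -/
def covD2C (H : V4 → ℝ) (h : Fin 4 → Fin 4 → V4 → ℂ) (c a b : Fin 4) (x : V4) : ℂ :=
  pdC c (h a b) x - (∑ d, (Gam H d c a x : ℂ) * h d b x)
    - ∑ d, (Gam H d c b x : ℂ) * h a d x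

/-- Covariant derivative of a complex 3-tensor. -/
def covD3C (H : V4 → ℝ) (T : Fin 4 → Fin 4 → Fin 4 → V4 → ℂ) (c d a b : Fin 4)
    (x : V4) : ℂ :=
  pdC c (T d a b) x - (∑ e, (Gam H e c d x : ℂ) * T e a b x)
    - (∑ e, (Gam H e c a x : ℂ) * T d e b x)
    - ∑ e, (Gam H e c b x : ℂ) * T d a e x

/-- Second covariant derivative (∇_c ∇_d h)_{ab} of a complex 2-tensor. -/
def DDh (H : V4 → ℝ) (h : Fin 4 → Fin 4 → V4 → ℂ) (c d a b : Fin 4) (x : V4) : ℂ :=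
  covD3C H (fun d a b => covD2C H h d a b) c d a b x

/-- Covariant Hessian of a complex scalar: ∇_a∇_b φ = ∂_a∂_b φ − Σ_c Γ^c_{ab} ∂_c φ. -/
def hessOp (H : V4 → ℝ) (φ : V4 → ℂ) (a b : Fin 4) (x : V4) : ℂ :=
  pdC a (pdC b φ) x - ∑ c, (Gam H c a b x : ℂ) * pdC c φ x

/-- Metric trace of a complex 2-tensor: Σ_{c,d} (G⁻¹)^{cd} h_{cd}. -/
def trOp (H : V4 → ℝ) (h : Fin 4 → Fin 4 → V4 → ℂ) : V4 → ℂ :=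
  fun x => ∑ c, ∑ d, (gInv H x c d : ℂ) * h c d x

/-- Linearized Ricci operator Ṙ[h]_{ab}. -/
def linRic (H : V4 → ℝ) (h : Fin 4 → Fin 4 → V4 → ℂ) (a b : Fin 4) (x : V4) : ℂ :=
  -(1/2) * ((∑ c, ∑ d, (gInv H x c d : ℂ) * DDh H h c d a b x)
    + hessOp H (trOp H h) a b x
    - (∑ c, ∑ d, (gInv H x c d : ℂ) * DDh H h c a b d x)
    - ∑ c, ∑ d, (gInv H x c d : ℂ) * DDh H h c b a d x)

/-- Components of the covector dv. -/
def dvC : Fin 4 → ℂ := ![0, 1, 0, 0]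

/-- Components of the covector dζ = (dx + i dy)/√2. -/
def dzC : Fin 4 → ℂ := ![0, 0, 1 / (Real.sqrt 2 : ℂ), Complex.I / (Real.sqrt 2 : ℂ)]

/-- The Hertz-potential tensor
    hᴴ[Φ] = (∂_ζ̄²Φ) dv⊗dv + (∂_u∂_ζ̄Φ)(dv⊗dζ + dζ⊗dv) + (∂_u²Φ) dζ⊗dζ. -/
def hertz (Φ : V4 → ℂ) (a b : Fin 4) (x : V4) : ℂ :=
  pdZb (pdZb Φ) x * dvC a * dvC b
    + pdC 0 (pdZb Φ) x * (dvC a * dzC b + dzC a * dvC b)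
    + pdC 0 (pdC 0 Φ) x * (dzC a * dzC b)

/-- The Ricci tensor of the Brinkmann metric: only R_vv = (1/2)(∂_x²H+∂_y²H) is
possibly nonzero; Ricci-flat iff H is transversally harmonic. -/

lemma gInv_eq (H : V4 → ℝ) (x : V4) :
    gInv H x = !![-H x, 1, 0, 0; 1, 0, 0, 0; 0, 0, -1, 0; 0, 0, 0, -1] := by
  rw [gInv, Matrix.inv_eq_right_inv]
  ext i j
  fin_cases i <;> fin_cases j <;>
    simp [brinkmann, Matrix.mul_apply, Fin.sum_univ_four, Matrix.vecHead, Matrix.vecTail]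

lemma pdR_const' (a : Fin 4) (c : ℝ) (x : V4) : pdR a (fun _ => c) x = 0 := by
  simp [pdR]

def gamF (H : V4 → ℝ) : Fin 4 → Fin 4 → Fin 4 → V4 → ℝ :=
  ![![![fun _ => 0, fun x => pdR 0 H x / 2, fun _ => 0, fun _ => 0],
     ![fun x => pdR 0 H x / 2, fun x => (H x * pdR 0 H x + pdR 1 H x) / 2,
       fun x => pdR 2 H x / 2, fun x => pdR 3 H x / 2],
     ![fun _ => 0, fun x => pdR 2 H x / 2, fun _ => 0, fun _ => 0],
     ![fun _ => 0, fun x => pdR 3 H x / 2, fun _ => 0, fun _ => 0]],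
    ![![fun _ => 0, fun _ => 0, fun _ => 0, fun _ => 0],
     ![fun _ => 0, fun x => -pdR 0 H x / 2, fun _ => 0, fun _ => 0],
     ![fun _ => 0, fun _ => 0, fun _ => 0, fun _ => 0],
     ![fun _ => 0, fun _ => 0, fun _ => 0, fun _ => 0]],
    ![![fun _ => 0, fun _ => 0, fun _ => 0, fun _ => 0],
     ![fun _ => 0, fun x => pdR 2 H x / 2, fun _ => 0, fun _ => 0],
     ![fun _ => 0, fun _ => 0, fun _ => 0, fun _ => 0],
     ![fun _ => 0, fun _ => 0, fun _ => 0, fun _ => 0]],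
    ![![fun _ => 0, fun _ => 0, fun _ => 0, fun _ => 0],
     ![fun _ => 0, fun x => pdR 3 H x / 2, fun _ => 0, fun _ => 0],
     ![fun _ => 0, fun _ => 0, fun _ => 0, fun _ => 0],
     ![fun _ => 0, fun _ => 0, fun _ => 0, fun _ => 0]]]

set_option maxHeartbeats 2000000 in
lemma gam_eq' (H : V4 → ℝ) (c a b : Fin 4) (x : V4) : Gam H c a b x = gamF H c a b x := by
  fin_cases c <;> fin_cases a <;> fin_cases b <;>
    simp [Gam, gamF, gInv_eq, Fin.sum_univ_four, brinkmann, pdR_const',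
      Matrix.vecHead, Matrix.vecTail] <;> ring

lemma pdpd' (H : V4 → ℝ) (x : V4) (hder : DifferentiableAt ℝ (fderiv ℝ H) x) (i j : Fin 4) :
    pdR i (pdR j H) x = fderiv ℝ (fderiv ℝ H) x (Pi.single i 1) (Pi.single j 1) := by
  show fderiv ℝ (fun y => fderiv ℝ H y (Pi.single j 1)) x (Pi.single i 1) = _
  rw [fderiv_clm_apply hder (differentiableAt_const _)]
  simp

set_option maxHeartbeats 4000000 in
lemma ric_main (U : Set V4) (hUopen : IsOpen U)
    (H : V4 → ℝ) (hH : ContDiffOn ℝ (⊤ : ℕ∞) H U)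
    (hHu : ∀ x ∈ U, pdR 0 H x = 0) (x : V4) (hx : x ∈ U) :
    (ric H 1 1 x = (1/2) * (pdR 2 (pdR 2 H) x + pdR 3 (pdR 3 H) x)) ∧
    (∀ a b : Fin 4, (a, b) ≠ ((1 : Fin 4), (1 : Fin 4)) → ric H a b x = 0) := by
  have hct : ContDiffAt ℝ 2 H x :=
    (hH.contDiffAt (hUopen.mem_nhds hx)).of_le (WithTop.coe_le_coe.mpr le_top)
  have hder : DifferentiableAt ℝ (fderiv ℝ H) x :=
    ((hct.fderiv_right (m := 1) (by norm_num)).differentiableAt one_ne_zero)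
  have hsym := hct.isSymmSndFDerivAt (by simp)
  have S : ∀ i j : Fin 4, pdR i (pdR j H) x = pdR j (pdR i H) x := fun i j => by
    rw [pdpd' H x hder, pdpd' H x hder]; exact hsym _ _
  have E : pdR 0 H =ᶠ[nhds x] fun _ => (0:ℝ) := by
    filter_upwards [hUopen.mem_nhds hx] with y hy using hHu y hy
  have A : ∀ i : Fin 4, pdR i (pdR 0 H) x = 0 := fun i => by
    show fderiv ℝ (pdR 0 H) x _ = 0
    rw [E.fderiv_eq]; simp
  have B : ∀ j : Fin 4, pdR 0 (pdR j H) x = 0 := fun j => (S 0 j).trans (A j)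
  have hdiff : ∀ j : Fin 4, DifferentiableAt ℝ (pdR j H) x := fun j =>
    hder.clm_apply (differentiableAt_const _)
  have half : ∀ (c j : Fin 4), pdR c (fun y => pdR j H y / 2) x = pdR c (pdR j H) x / 2 := by
    intro c j
    show fderiv ℝ (fun y => pdR j H y / 2) x _ = _
    simp only [div_eq_inv_mul, fderiv_const_mul (hdiff j)]
    simp [pdR]
  have D00 : ∀ c : Fin 4, pdR c (fun y => pdR 0 H y / 2) x = 0 := fun c => by
    have h2 : (fun y => pdR 0 H y / 2) =ᶠ[nhds x] (fun _ => (0:ℝ)) :=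
      E.mono fun y hy => by simp [hy]
    show fderiv ℝ _ x _ = 0
    rw [h2.fderiv_eq]; simp
  have D111 : ∀ c : Fin 4, pdR c (fun y => -pdR 0 H y / 2) x = 0 := fun c => by
    have h2 : (fun y => -pdR 0 H y / 2) =ᶠ[nhds x] (fun _ => (0:ℝ)) :=
      E.mono fun y hy => by simp [hy]
    show fderiv ℝ _ x _ = 0
    rw [h2.fderiv_eq]; simp
  have D011 : ∀ c : Fin 4,
      pdR c (fun y => (H y * pdR 0 H y + pdR 1 H y) / 2) x = pdR c (pdR 1 H) x / 2 := fun c => by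
    have h2 : (fun y => (H y * pdR 0 H y + pdR 1 H y) / 2) =ᶠ[nhds x]
        (fun y => pdR 1 H y / 2) := E.mono fun y hy => by simp [hy]
    show fderiv ℝ _ x _ = _
    rw [h2.fderiv_eq]; exact half c 1
  have gL : ∀ c a b : Fin 4, (fun y => Gam H c a b y) = gamF H c a b := fun c a b =>
    funext fun y => gam_eq' H c a b y
  constructor
  · simp only [ric, Fin.sum_univ_four, gL, gam_eq']
    simp [gamF, D00, D011, D111, half, pdR_const', A, B, hHu x hx,
      Matrix.vecHead, Matrix.vecTail]
    ring
  · intro a b hab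
    fin_cases a <;> fin_cases b <;>
      first
      | exact absurd rfl hab
      | (simp only [ric, Fin.sum_univ_four, gL, gam_eq']
         simp [gamF, D00, D011, D111, half, pdR_const', A, B, hHu x hx,
           Matrix.vecHead, Matrix.vecTail]
         try ring)

theorem stmt1 (U : Set V4) (hUopen : IsOpen U)
    (H : V4 → ℝ) (hH : ContDiffOn ℝ (⊤ : ℕ∞) H U)
    (hHu : ∀ x ∈ U, pdR 0 H x = 0) :
    (∀ x ∈ U, ric H 1 1 x = (1/2) * (pdR 2 (pdR 2 H) x + pdR 3 (pdR 3 H) x)) ∧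
    (∀ x ∈ U, ∀ a b : Fin 4, (a, b) ≠ ((1 : Fin 4), (1 : Fin 4)) → ric H a b x = 0) ∧
    ((∀ x ∈ U, ∀ a b : Fin 4, ric H a b x = 0) ↔
      (∀ x ∈ U, pdR 2 (pdR 2 H) x + pdR 3 (pdR 3 H) x = 0)) := by
  refine ⟨fun x hx => (ric_main U hUopen H hH hHu x hx).1,
    fun x hx a b hab => (ric_main U hUopen H hH hHu x hx).2 a b hab, ?_, ?_⟩
  · intro h x hx
    have h1 := h x hx 1 1
    rw [(ric_main U hUopen H hH hHu x hx).1] at h1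
    linarith
  · intro h x hx a b
    by_cases hab : (a, b) = ((1 : Fin 4), (1 : Fin 4))
    · have ha : a = 1 := congrArg Prod.fst hab
      have hb : b = 1 := congrArg Prod.snd hab
      subst ha; subst hb
      rw [(ric_main U hUopen H hH hHu x hx).1, h x hx]; ring
    · exact (ric_main U hUopen H hH hHu x hx).2 a b hab
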